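/- arXiv:1502.04072 — 4 statements merged into one kernel-verified Lean document; each statement's English description precedes it below -/
import Mathlib

section
/- For every β ∈ (0,1), the kernel K_β(r) = (1/π) · r^(β−1) sin(βπ) / (r^(2β) + 2 r^β cos(βπ) + 1) satisfies K_β(r) ≥ 0 for all r > 0 and ∫_0^∞ K_β(r) dr = 1. -/
open Real

/-- The spectral kernel `K_β(r) = (1/π) r^(β-1) sin(βπ) / (r^(2β) + 2 r^β cos(βπ) + 1)`. -/
noncomputable def mlKernel (β : ℝ) (r : ℝ) : ℝ :=
  (1 / π) * (r ^ (β - 1) * Real.sin (β * π)) /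
    (r ^ (2 * β) + 2 * r ^ β * Real.cos (β * π) + 1)

private lemma mlKernel_alg (p s B b A c : ℝ) (hp : p ≠ 0) (hs : s ≠ 0) (hb : b ≠ 0)
    (hd : (A + c) ^ 2 + s ^ 2 ≠ 0) :
    1 / p * (B * s) / ((A + c) ^ 2 + s ^ 2) =
      1 / (b * p) * (1 / (1 + ((A + c) / s) ^ 2) * (b * B / s)) := by
  have h1 : 1 + ((A + c) / s) ^ 2 = ((A + c) ^ 2 + s ^ 2) / s ^ 2 := by
    field_simp; ring
  rw [h1]
  field_simp

/-- For `β ∈ (0,1)`, the kernel `K_β` is non-negative on `(0,∞)` and integrates to `1`. -/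
theorem mlKernel_nonneg_and_integral_one (β : ℝ) (hβ : β ∈ Set.Ioo (0 : ℝ) 1) :
    (∀ r : ℝ, 0 < r → 0 ≤ mlKernel β r) ∧
      (∫ r in Set.Ioi (0 : ℝ), mlKernel β r) = 1 := by
  obtain ⟨hβ0, hβ1⟩ := hβ
  have hπ : (0:ℝ) < π := Real.pi_pos
  have hθ0 : 0 < β * π := mul_pos hβ0 hπ
  have hθπ : β * π < π := by nlinarith
  have hs : 0 < Real.sin (β * π) := Real.sin_pos_of_pos_of_lt_pi hθ0 hθπ
  have hsc : Real.sin (β * π) ^ 2 + Real.cos (β * π) ^ 2 = 1 :=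
    Real.sin_sq_add_cos_sq (β * π)
  -- denominator identity for r > 0
  have hden : ∀ r : ℝ, 0 < r →
      r ^ (2 * β) + 2 * r ^ β * Real.cos (β * π) + 1 =
        (r ^ β + Real.cos (β * π)) ^ 2 + Real.sin (β * π) ^ 2 := by
    intro r hr
    have h2 : r ^ (2 * β) = (r ^ β) ^ 2 := by
      rw [two_mul, Real.rpow_add hr]; ring
    rw [h2]; nlinarith
  have hnonneg : ∀ r : ℝ, 0 < r → 0 ≤ mlKernel β r := by
    intro r hr
    unfold mlKernel
    have h1 : 0 ≤ (1 / π) * (r ^ (β - 1) * Real.sin (β * π)) := by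
      have : 0 < r ^ (β - 1) := Real.rpow_pos_of_pos hr _
      positivity
    refine div_nonneg h1 ?_
    rw [hden r hr]; positivity
  refine ⟨hnonneg, ?_⟩
  -- antiderivative
  set F : ℝ → ℝ := fun r =>
    (1 / (β * π)) * Real.arctan ((r ^ β + Real.cos (β * π)) / Real.sin (β * π)) with hF
  have hrpow : Continuous fun r : ℝ => r ^ β := by
    rw [continuous_iff_continuousAt]
    intro x
    exact Real.continuousAt_rpow_const x β (Or.inr hβ0.le)
  have hcontF : Continuous F := by
    apply Continuous.mul continuous_const
    exact Real.continuous_arctan.comp ((hrpow.add continuous_const).div_const _)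
  have hcont : ContinuousWithinAt F (Set.Ici 0) 0 :=
    hcontF.continuousAt.continuousWithinAt
  have hderiv : ∀ x ∈ Set.Ioi (0:ℝ), HasDerivAt F (mlKernel β x) x := by
    intro x hx
    have hx0 : (0:ℝ) < x := hx
    have h1 : HasDerivAt (fun r : ℝ => r ^ β) (β * x ^ (β - 1)) x :=
      Real.hasDerivAt_rpow_const (Or.inl hx0.ne')
    have h2 : HasDerivAt
        (fun r : ℝ => (r ^ β + Real.cos (β * π)) / Real.sin (β * π))
        (β * x ^ (β - 1) / Real.sin (β * π)) x :=
      (h1.add_const _).div_const _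
    have h3 := ((Real.hasDerivAt_arctan
        ((x ^ β + Real.cos (β * π)) / Real.sin (β * π))).comp x h2).const_mul (1 / (β * π))
    refine h3.congr_deriv (Eq.symm ?_)
    unfold mlKernel
    rw [hden x hx0]
    have hd : (0:ℝ) < (x ^ β + Real.cos (β * π)) ^ 2 + Real.sin (β * π) ^ 2 := by positivity
    exact mlKernel_alg π _ _ β _ _ hπ.ne' hs.ne' hβ0.ne' hd.ne'
  have htop : Filter.Tendsto F Filter.atTop (nhds ((1 / (β * π)) * (π / 2))) := by
    have h1 : Filter.Tendsto (fun r : ℝ => r ^ β) Filter.atTop Filter.atTop :=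
      tendsto_rpow_atTop hβ0
    have h2 : Filter.Tendsto
        (fun r : ℝ => (r ^ β + Real.cos (β * π)) / Real.sin (β * π))
        Filter.atTop Filter.atTop :=
      (Filter.tendsto_atTop_add_const_right _ _ h1).atTop_div_const hs
    exact ((Real.tendsto_arctan_atTop.mono_right nhdsWithin_le_nhds).comp h2).const_mul _
  have key := MeasureTheory.integral_Ioi_of_hasDerivAt_of_nonneg hcont hderiv
    (fun x hx => hnonneg x hx) htop
  rw [key, hF]
  have h0 : (0:ℝ) ^ β = 0 := Real.zero_rpow hβ0.ne'
  have harct : Real.arctan (((0:ℝ) ^ β + Real.cos (β * π)) / Real.sin (β * π))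
      = π / 2 - β * π := by
    rw [h0, zero_add]
    have h5 : Real.cos (β * π) / Real.sin (β * π) = Real.tan (π / 2 - β * π) := by
      rw [Real.tan_pi_div_two_sub, Real.tan_eq_sin_div_cos, inv_div]
    rw [h5, Real.arctan_tan] <;> linarith
  simp only [harct]
  field_simp
  ring
end

section
/- For every β ∈ (0,1), the Mittag-Leffler distribution of order β has infinite mean: ∫_0^∞ E_β(−t^β) dt = ∞. -/
open MeasureTheory
open scoped ENNReal


/-- The real Mittag-Leffler function of order `β`,
`E_β(x) = ∑ n, x ^ n / Γ(1 + β n)`. -/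
noncomputable def mittagLefflerReal (β : ℝ) (x : ℝ) : ℝ :=
  ∑' n : ℕ, x ^ n / Real.Gamma (1 + β * n)



lemma ml_gamma_pos {β : ℝ} (hβ : 0 < β) (n : ℕ) : 0 < Real.Gamma (1 + β * n) :=
  Real.Gamma_pos_of_pos (by positivity)

lemma ml_summable {β : ℝ} (hβ : 0 < β) {x : ℝ} (hx : 0 ≤ x) :
    Summable (fun n : ℕ => x ^ n / Real.Gamma (1 + β * n)) := by
  set y : ℝ := 2 * x + 2 with hy
  have hy1 : (1:ℝ) ≤ y := by simp only [hy]; linarith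
  have hy0 : (0:ℝ) < y := by linarith
  have hxy0 : 0 ≤ x / y := by positivity
  have hxy : x / y ≤ 1 / 2 := by rw [div_le_div_iff₀ hy0 two_pos]; linarith
  have hxylt : x / y < 1 := hxy.trans_lt (by norm_num)
  set q : ℝ := y ^ (β⁻¹) with hqdef
  have hq1 : 1 ≤ q := Real.one_le_rpow hy1 (by positivity)
  have hq0 : 0 < q := lt_of_lt_of_le one_pos hq1
  have hqβ : q ^ β = y := Real.rpow_inv_rpow hy0.le hβ.ne'
  set N := ⌈β⁻¹⌉₊ with hN
  rw [← summable_nat_add_iff N]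
  have hsum : Summable (fun n : ℕ => (Real.exp q * q) * (x / y) ^ n) :=
    (summable_geometric_of_lt_one hxy0 hxylt).mul_left _
  refine Summable.of_nonneg_of_le (fun n => div_nonneg (by positivity) (ml_gamma_pos hβ _).le) (fun n => ?_) hsum
  set m : ℕ := n + N with hm
  have hβm : 1 ≤ β * (m : ℝ) := by
    have h1 : (β : ℝ)⁻¹ ≤ (N : ℝ) := Nat.le_ceil _
    have h2 : (N : ℝ) ≤ (m : ℝ) := by exact_mod_cast Nat.le_add_left N n
    calc (1:ℝ) = β * β⁻¹ := (mul_inv_cancel₀ hβ.ne').symm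
      _ ≤ β * (N : ℝ) := mul_le_mul_of_nonneg_left h1 hβ.le
      _ ≤ β * (m : ℝ) := mul_le_mul_of_nonneg_left h2 hβ.le
  set k : ℕ := ⌊β * (m : ℝ)⌋₊ with hk
  have hk1 : 1 ≤ k := Nat.le_floor (by exact_mod_cast hβm)
  have hkle : (k : ℝ) ≤ β * m := Nat.floor_le (by positivity)
  have hkge : β * m - 1 ≤ (k : ℝ) := by
    have := Nat.lt_floor_add_one (β * (m : ℝ)); linarith
  have hfact : (0:ℝ) < (k.factorial : ℝ) := by exact_mod_cast k.factorial_pos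
  have hΓ : (k.factorial : ℝ) ≤ Real.Gamma (1 + β * m) := by
    rw [← Real.Gamma_nat_eq_factorial k]
    apply Real.Gamma_strictMonoOn_Ici.monotoneOn _ _ (by linarith)
    · simp only [Set.mem_Ici]
      have : (1:ℝ) ≤ (k:ℝ) := by exact_mod_cast hk1
      linarith
    · simp only [Set.mem_Ici]; linarith
  have hpf : q ^ k / (k.factorial : ℝ) ≤ Real.exp q := Real.pow_div_factorial_le_exp q hq0.le k
  have hq_k : y ^ m / q ≤ q ^ k := by
    have e1 : q ^ k = q ^ ((k : ℝ)) := (Real.rpow_natCast q k).symm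
    have e2 : q ^ (β * (m:ℝ) - 1) ≤ q ^ ((k:ℝ)) := Real.rpow_le_rpow_of_exponent_le hq1 hkge
    have e3 : q ^ (β * (m:ℝ) - 1) = q ^ (β * (m:ℝ)) / q := by
      rw [Real.rpow_sub hq0, Real.rpow_one]
    have e4 : q ^ (β * (m:ℝ)) = y ^ m := by
      rw [Real.rpow_mul hq0.le, hqβ, Real.rpow_natCast]
    rw [e1, ← e4, ← e3]; exact e2
  have key : y ^ m ≤ Real.exp q * q * (k.factorial : ℝ) := by
    have hqk : q ^ k ≤ Real.exp q * (k.factorial : ℝ) := by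
      rw [div_le_iff₀ hfact] at hpf; linarith
    calc y ^ m = y ^ m / q * q := by field_simp
      _ ≤ q ^ k * q := mul_le_mul_of_nonneg_right hq_k hq0.le
      _ ≤ Real.exp q * (k.factorial : ℝ) * q := mul_le_mul_of_nonneg_right hqk hq0.le
      _ = Real.exp q * q * (k.factorial : ℝ) := by ring
  have hy0m : (0:ℝ) < y ^ m := by positivity
  calc x ^ m / Real.Gamma (1 + β * m) ≤ x ^ m / (k.factorial : ℝ) := by
        apply div_le_div_of_nonneg_left (by positivity) hfact hΓ
    _ ≤ Real.exp q * q * (x / y) ^ m := by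
        rw [div_pow, mul_div_assoc', div_le_div_iff₀ hfact hy0m]
        calc x ^ m * y ^ m ≤ x ^ m * (Real.exp q * q * (k.factorial : ℝ)) :=
              mul_le_mul_of_nonneg_left key (by positivity)
          _ = Real.exp q * q * x ^ m * (k.factorial : ℝ) := by ring
    _ ≤ Real.exp q * q * (x / y) ^ n := by
        apply mul_le_mul_of_nonneg_left
          (pow_le_pow_of_le_one hxy0 hxylt.le (Nat.le_add_right n N)) (by positivity)

lemma beta_aux {a b : ℝ} (ha : 0 ≤ a) (hb : 0 ≤ b) {T : ℝ} (hT : 0 < T) :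
    ∫ s in (0:ℝ)..T, s ^ a * (T - s) ^ b =
      Real.Gamma (a + 1) * Real.Gamma (b + 1) / Real.Gamma (a + b + 2) * T ^ (a + b + 1) := by
  have ha1 : (0:ℝ) < a + 1 := by linarith
  have hb1 : (0:ℝ) < b + 1 := by linarith
  have hab : (0:ℝ) < Real.Gamma (a + b + 2) := Real.Gamma_pos_of_pos (by linarith)
  have h1 := Complex.Gamma_mul_Gamma_eq_betaIntegral
    (s := ((a : ℝ) + 1 : ℂ)) (t := ((b : ℝ) + 1 : ℂ)) (by simpa using ha1) (by simpa using hb1)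
  have h2 := Complex.betaIntegral_scaled ((a : ℝ) + 1 : ℂ) ((b : ℝ) + 1 : ℂ) hT
  -- identify the complex integral with the real one
  have h3 : (∫ x : ℝ in (0:ℝ)..T, (x : ℂ) ^ (((a:ℝ) + 1 : ℂ) - 1) *
        ((T : ℂ) - x) ^ (((b:ℝ) + 1 : ℂ) - 1)) =
      ((∫ s in (0:ℝ)..T, s ^ a * (T - s) ^ b : ℝ) : ℂ) := by
    rw [← intervalIntegral.integral_ofReal]
    refine intervalIntegral.integral_congr_ae ?_
    have : ∀ x ∈ Set.Ioc (0:ℝ) T, (x : ℂ) ^ (((a:ℝ) + 1 : ℂ) - 1) *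
        ((T : ℂ) - x) ^ (((b:ℝ) + 1 : ℂ) - 1) = ((x ^ a * (T - x) ^ b : ℝ) : ℂ) := by
      intro x hx
      have hx0 : (0:ℝ) ≤ x := hx.1.le
      have hTx : (0:ℝ) ≤ T - x := by linarith [hx.2]
      rw [Complex.ofReal_mul, Complex.ofReal_cpow hx0, Complex.ofReal_cpow hTx]
      push_cast
      ring_nf
    filter_upwards [] with x
    intro hx
    have hx' : x ∈ Set.Ioc (0:ℝ) T := by
      rwa [Set.uIoc_of_le hT.le] at hx
    exact this x hx'
  have e1 : Complex.Gamma ((a:ℝ)+1:ℂ) = ((Real.Gamma (a+1) : ℝ) : ℂ) := by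
    rw [show ((a:ℝ)+1:ℂ) = ((a+1:ℝ):ℂ) by push_cast; ring, Complex.Gamma_ofReal]
  have e2 : Complex.Gamma ((b:ℝ)+1:ℂ) = ((Real.Gamma (b+1) : ℝ) : ℂ) := by
    rw [show ((b:ℝ)+1:ℂ) = ((b+1:ℝ):ℂ) by push_cast; ring, Complex.Gamma_ofReal]
  have hΓc : Complex.Gamma (((a:ℝ)+1:ℂ) + ((b:ℝ)+1:ℂ)) = ((Real.Gamma (a+b+2) : ℝ) : ℂ) := by
    rw [show (((a:ℝ)+1:ℂ) + ((b:ℝ)+1:ℂ)) = ((a+b+2:ℝ):ℂ) by push_cast; ring,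
      Complex.Gamma_ofReal]
  have hne : ((Real.Gamma (a+b+2) : ℝ) : ℂ) ≠ 0 := by exact_mod_cast hab.ne'
  have hbeta : Complex.betaIntegral ((a:ℝ)+1) ((b:ℝ)+1) =
      ((Real.Gamma (a+1) * Real.Gamma (b+1) / Real.Gamma (a+b+2) : ℝ) : ℂ) := by
    rw [e1, e2, hΓc] at h1
    rw [Complex.ofReal_div, Complex.ofReal_mul, eq_div_iff hne]
    linear_combination -h1
  rw [h3, hbeta] at h2
  have hTz : ((T:ℂ)) ^ ((((a:ℝ)+1:ℂ)) + (((b:ℝ)+1:ℂ)) - 1) = ((T ^ (a+b+1) : ℝ) : ℂ) := by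
    rw [show (((a:ℝ)+1:ℂ)) + (((b:ℝ)+1:ℂ)) - 1 = ((a+b+1:ℝ):ℂ) by push_cast; ring,
      ← Complex.ofReal_cpow hT.le]
  rw [hTz, ← Complex.ofReal_mul] at h2
  have := Complex.ofReal_inj.mp h2
  rw [this, mul_comm]

lemma ml_eq_tsum {β : ℝ} (hβ : 0 < β) {t : ℝ} (ht : 0 < t) :
    mittagLefflerReal β (-(t ^ β)) =
      ∑' n : ℕ, (-1:ℝ) ^ n * t ^ (β * n) / Real.Gamma (1 + β * n) := by
  refine tsum_congr fun n => ?_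
  rw [neg_pow, Real.rpow_mul ht.le, Real.rpow_natCast]

lemma ml_contOn {β : ℝ} (hβ : 0 < β) {T : ℝ} (hT : 0 < T) :
    ContinuousOn (fun t : ℝ => mittagLefflerReal β (-(t ^ β))) (Set.Icc 0 T) := by
  show ContinuousOn (fun t : ℝ => ∑' n : ℕ, (-(t ^ β)) ^ n / Real.Gamma (1 + β * n)) _
  apply continuousOn_tsum (u := fun n : ℕ => (T ^ β) ^ n / Real.Gamma (1 + β * n))
  · intro i
    exact (((Real.continuous_rpow_const hβ.le).neg.pow i).div_const _).continuousOn
  · exact ml_summable hβ (Real.rpow_nonneg hT.le β)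
  · intro n t ht
    rw [norm_div, norm_pow, norm_neg, Real.norm_of_nonneg (Real.rpow_nonneg ht.1 β),
      Real.norm_of_nonneg (ml_gamma_pos hβ n).le]
    apply div_le_div_of_nonneg_right ?_ (ml_gamma_pos hβ n).le
    exact pow_le_pow_left₀ (Real.rpow_nonneg ht.1 β) (Real.rpow_le_rpow ht.1 ht.2 hβ.le) n

lemma ml_norm_int_bound {β : ℝ} (hβ : 0 < β) {T : ℝ} (hT : 0 < T) {c : ℝ} (hc : 0 ≤ c)
    {g : ℝ → ℝ} (hg : IntegrableOn g (Set.Ioc 0 T) volume)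
    (hgb : ∀ t ∈ Set.Ioc (0:ℝ) T, ‖g t‖ ≤ c) :
    ∫ t in Set.Ioc (0:ℝ) T, ‖g t‖ ≤ c * T := by
  have h1 : ∫ t in Set.Ioc (0:ℝ) T, ‖g t‖ ≤ ∫ _ in Set.Ioc (0:ℝ) T, c := by
    apply setIntegral_mono_on hg.norm ((integrableOn_const_iff).mpr (Or.inr measure_Ioc_lt_top))
      measurableSet_Ioc hgb
  refine h1.trans ?_
  rw [setIntegral_const, Real.volume_real_Ioc_of_le hT.le, smul_eq_mul, sub_zero,
    mul_comm]

lemma ml_integral_eq {β : ℝ} (hβ : 0 < β) {T : ℝ} (hT : 0 < T) :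
    ∫ t in Set.Ioc (0:ℝ) T, mittagLefflerReal β (-(t ^ β)) =
      ∑' n : ℕ, (-1:ℝ) ^ n * T ^ (β * n + 1) / Real.Gamma (β * n + 2) := by
  set F : ℕ → ℝ → ℝ := fun n t => ((-1:ℝ) ^ n / Real.Gamma (1 + β * n)) * t ^ (β * (n:ℝ))
    with hF
  have hFcont : ∀ n, Continuous (F n) := fun n =>
    continuous_const.mul (Real.continuous_rpow_const (by positivity))
  have hFint : ∀ n, IntegrableOn (F n) (Set.Ioc 0 T) volume := fun n =>
    (hFcont n).integrableOn_Ioc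
  have hFbound : ∀ n, ∀ t ∈ Set.Ioc (0:ℝ) T, ‖F n t‖ ≤ (T ^ β) ^ n / Real.Gamma (1 + β * n) := by
    intro n t ht
    rw [hF]
    simp only [norm_mul, norm_div, norm_pow, norm_neg, norm_one, one_pow]
    rw [Real.norm_of_nonneg (ml_gamma_pos hβ n).le,
      Real.norm_of_nonneg (Real.rpow_nonneg ht.1.le _)]
    rw [one_div, div_eq_inv_mul]
    apply mul_le_mul_of_nonneg_left ?_ (by positivity)
    calc t ^ (β * (n:ℝ)) = (t ^ β) ^ n := by rw [Real.rpow_mul ht.1.le, Real.rpow_natCast]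
      _ ≤ (T ^ β) ^ n :=
        pow_le_pow_left₀ (Real.rpow_nonneg ht.1.le β) (Real.rpow_le_rpow ht.1.le ht.2 hβ.le) n
  have hnorm : Summable fun n => ∫ t in Set.Ioc (0:ℝ) T, ‖F n t‖ := by
    apply Summable.of_nonneg_of_le
      (fun n => integral_nonneg fun t => norm_nonneg _)
      (fun n => ml_norm_int_bound hβ hT
        (div_nonneg (by positivity) (ml_gamma_pos hβ n).le) (hFint n) (hFbound n))
      (((ml_summable hβ (Real.rpow_nonneg hT.le β)).mul_right T))
  have hcongr : ∀ t ∈ Set.Ioc (0:ℝ) T, mittagLefflerReal β (-(t ^ β)) = ∑' n, F n t := by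
    intro t ht
    rw [ml_eq_tsum hβ ht.1]
    exact tsum_congr fun n => by rw [hF]; ring
  rw [setIntegral_congr_fun measurableSet_Ioc hcongr,
    ← integral_tsum_of_summable_integral_norm hFint hnorm]
  refine tsum_congr fun n => ?_
  have hβn1 : (0:ℝ) < β * n + 1 := by positivity
  have hint : ∫ t in Set.Ioc (0:ℝ) T, t ^ (β * (n:ℝ)) = T ^ (β * n + 1) / (β * n + 1) := by
    rw [← intervalIntegral.integral_of_le hT.le, integral_rpow (Or.inl (lt_of_lt_of_le neg_one_lt_zero (by positivity))),
      Real.zero_rpow hβn1.ne', sub_zero]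
  have hΓ1 : (0:ℝ) < Real.Gamma (β * n + 1) := Real.Gamma_pos_of_pos hβn1
  have hΓ2 : Real.Gamma (β * n + 2) = (β * n + 1) * Real.Gamma (β * n + 1) := by
    rw [show β * (n:ℝ) + 2 = (β * n + 1) + 1 by ring, Real.Gamma_add_one hβn1.ne']
  have h1β : Real.Gamma (1 + β * n) = Real.Gamma (β * n + 1) := by rw [add_comm]
  simp only [hF]
  rw [MeasureTheory.integral_const_mul, hint, h1β, hΓ2]
  field_simp

lemma ml_kernel_integral_eq {β : ℝ} (hβ : 0 < β) {T : ℝ} (hT : 0 < T) :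
    ∫ s in Set.Ioc (0:ℝ) T, (T - s) ^ β * mittagLefflerReal β (-(s ^ β)) =
      ∑' n : ℕ, (-1:ℝ) ^ n *
        (Real.Gamma (β + 1) * T ^ (β * n + β + 1) / Real.Gamma (β * n + β + 2)) := by
  set G : ℕ → ℝ → ℝ := fun n s =>
    ((-1:ℝ) ^ n / Real.Gamma (1 + β * n)) * (s ^ (β * (n:ℝ)) * (T - s) ^ β) with hG
  have hGcont : ∀ n, Continuous (G n) := fun n =>
    continuous_const.mul ((Real.continuous_rpow_const (by positivity)).mul
      ((Real.continuous_rpow_const hβ.le).comp (continuous_const.sub continuous_id)))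
  have hGint : ∀ n, IntegrableOn (G n) (Set.Ioc 0 T) volume := fun n =>
    (hGcont n).integrableOn_Ioc
  have hGbound : ∀ n, ∀ s ∈ Set.Ioc (0:ℝ) T,
      ‖G n s‖ ≤ T ^ β * ((T ^ β) ^ n / Real.Gamma (1 + β * n)) := by
    intro n s hs
    have hs0 : (0:ℝ) ≤ s := hs.1.le
    have hTs : (0:ℝ) ≤ T - s := by linarith [hs.2]
    rw [hG]
    simp only [norm_mul, norm_div, norm_pow, norm_neg, norm_one, one_pow]
    rw [Real.norm_of_nonneg (ml_gamma_pos hβ n).le,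
      Real.norm_of_nonneg (Real.rpow_nonneg hs0 _), Real.norm_of_nonneg (Real.rpow_nonneg hTs _)]
    have h1 : s ^ (β * (n:ℝ)) ≤ (T ^ β) ^ n := by
      calc s ^ (β * (n:ℝ)) = (s ^ β) ^ n := by rw [Real.rpow_mul hs0, Real.rpow_natCast]
        _ ≤ (T ^ β) ^ n :=
          pow_le_pow_left₀ (Real.rpow_nonneg hs0 β) (Real.rpow_le_rpow hs0 hs.2 hβ.le) n
    have h2 : (T - s) ^ β ≤ T ^ β := Real.rpow_le_rpow hTs (by linarith [hs.1]) hβ.le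
    calc 1 / Real.Gamma (1 + β * n) * (s ^ (β * (n:ℝ)) * (T - s) ^ β)
        ≤ 1 / Real.Gamma (1 + β * n) * ((T ^ β) ^ n * T ^ β) := by
          apply mul_le_mul_of_nonneg_left ?_ (one_div_nonneg.mpr (ml_gamma_pos hβ n).le)
          exact mul_le_mul h1 h2 (Real.rpow_nonneg hTs _) (by positivity)
      _ = T ^ β * ((T ^ β) ^ n / Real.Gamma (1 + β * n)) := by ring
  have hnorm : Summable fun n => ∫ s in Set.Ioc (0:ℝ) T, ‖G n s‖ := by
    apply Summable.of_nonneg_of_le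
      (fun n => integral_nonneg fun t => norm_nonneg _)
      (fun n => ml_norm_int_bound hβ hT
        (mul_nonneg (Real.rpow_nonneg hT.le _)
          (div_nonneg (by positivity) (ml_gamma_pos hβ n).le)) (hGint n) (hGbound n))
      (((ml_summable hβ (Real.rpow_nonneg hT.le β)).mul_left (T ^ β)).mul_right T)
  have hcongr : ∀ s ∈ Set.Ioc (0:ℝ) T,
      (T - s) ^ β * mittagLefflerReal β (-(s ^ β)) = ∑' n, G n s := by
    intro s hs
    rw [ml_eq_tsum hβ hs.1, ← tsum_mul_left]
    exact tsum_congr fun n => by rw [hG]; ring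
  rw [setIntegral_congr_fun measurableSet_Ioc hcongr,
    ← integral_tsum_of_summable_integral_norm hGint hnorm]
  refine tsum_congr fun n => ?_
  have hβn1 : (0:ℝ) < β * n + 1 := by positivity
  have hbeta : ∫ s in Set.Ioc (0:ℝ) T, s ^ (β * (n:ℝ)) * (T - s) ^ β =
      Real.Gamma (β * n + 1) * Real.Gamma (β + 1) / Real.Gamma (β * n + β + 2) *
        T ^ (β * n + β + 1) := by
    rw [← intervalIntegral.integral_of_le hT.le, beta_aux (by positivity) hβ.le hT]
  have hΓ1 : (0:ℝ) < Real.Gamma (β * n + 1) := Real.Gamma_pos_of_pos hβn1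
  have h1β : Real.Gamma (1 + β * n) = Real.Gamma (β * n + 1) := by rw [add_comm]
  simp only [hG]
  rw [MeasureTheory.integral_const_mul, hbeta, h1β]
  field_simp

lemma ofReal_integral_le {α : Type*} [MeasurableSpace α] {μ : Measure α} {f : α → ℝ}
    (hf : Integrable f μ) :
    ENNReal.ofReal (∫ a, f a ∂μ) ≤ ∫⁻ a, ENNReal.ofReal (f a) ∂μ := by
  have h1 : ∫ a, f a ∂μ ≤ ∫ a, max (f a) 0 ∂μ :=
    integral_mono hf hf.pos_part fun a => le_max_left _ _
  refine le_trans (ENNReal.ofReal_le_ofReal h1) ?_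
  rw [ofReal_integral_eq_lintegral_ofReal hf.pos_part
    (Filter.Eventually.of_forall fun a => le_max_right _ _)]
  refine lintegral_mono fun a => ?_
  rcases le_total (f a) 0 with h | h
  · simp [max_eq_right h]
  · simp [max_eq_left h]

lemma real_le_of_ofReal_le {x : ℝ} {c : ℝ≥0∞} (hc : c ≠ ⊤) (h : ENNReal.ofReal x ≤ c) :
    x ≤ c.toReal := by
  rcases le_or_gt x 0 with h0 | h0
  · exact h0.trans ENNReal.toReal_nonneg
  · rw [← ENNReal.toReal_ofReal h0.le]; exact ENNReal.toReal_mono hc h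

lemma ml_coeff_summable {β : ℝ} (hβ : 0 < β) {T : ℝ} (hT : 0 < T) :
    Summable (fun n : ℕ => (-1:ℝ) ^ n * T ^ (β * n + 1) / Real.Gamma (β * n + 2)) := by
  apply Summable.of_norm
  have hb : ∀ n : ℕ, ‖(-1:ℝ) ^ n * T ^ (β * n + 1) / Real.Gamma (β * n + 2)‖ ≤
      T * ((T ^ β) ^ n / Real.Gamma (1 + β * n)) := by
    intro n
    have hβn1 : (0:ℝ) < β * n + 1 := by positivity
    have hΓ1 : (0:ℝ) < Real.Gamma (β * n + 1) := Real.Gamma_pos_of_pos hβn1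
    have hΓ2 : Real.Gamma (β * n + 2) = (β * n + 1) * Real.Gamma (β * n + 1) := by
      rw [show β * (n:ℝ) + 2 = (β * n + 1) + 1 by ring, Real.Gamma_add_one hβn1.ne']
    have hΓ2pos : (0:ℝ) < Real.Gamma (β * n + 2) := by rw [hΓ2]; positivity
    rw [norm_div, norm_mul, norm_pow, norm_neg, norm_one, one_pow, one_mul,
      Real.norm_of_nonneg (Real.rpow_nonneg hT.le _), Real.norm_of_nonneg hΓ2pos.le]
    have e2 : T ^ (β * (n:ℝ) + 1) = (T ^ β) ^ n * T := by
      rw [Real.rpow_add hT, Real.rpow_one, ← Real.rpow_natCast (T ^ β) n,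
        ← Real.rpow_mul hT.le, mul_comm β (n:ℝ)]
    rw [e2]
    have hge : Real.Gamma (1 + β * n) ≤ Real.Gamma (β * n + 2) := by
      rw [hΓ2, add_comm (1:ℝ) (β * n)]
      nlinarith [hΓ1, mul_nonneg hβ.le (Nat.cast_nonneg n)]
    calc (T ^ β) ^ n * T / Real.Gamma (β * n + 2)
        ≤ (T ^ β) ^ n * T / Real.Gamma (1 + β * n) := by
          apply div_le_div_of_nonneg_left (by positivity) (ml_gamma_pos hβ n) hge
      _ = T * ((T ^ β) ^ n / Real.Gamma (1 + β * n)) := by ring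
  exact Summable.of_nonneg_of_le (fun n => norm_nonneg _) hb
    ((ml_summable hβ (Real.rpow_nonneg hT.le β)).mul_left T)

/-- For `β ∈ (0,1)`, the Mittag-Leffler distribution of order `β` has infinite mean:
the integral of its survival function `E_β(−t^β)` over `(0,∞)` is infinite. -/
theorem mittagLeffler_infinite_mean (β : ℝ) (hβ : β ∈ Set.Ioo (0 : ℝ) 1) :
    ∫⁻ t in Set.Ioi (0 : ℝ), ENNReal.ofReal (mittagLefflerReal β (-(t ^ β))) = ⊤ := by
  obtain ⟨hβ0, hβ1⟩ := hβ
  by_contra hC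
  set C : ℝ≥0∞ := ∫⁻ t in Set.Ioi (0:ℝ), ENNReal.ofReal (mittagLefflerReal β (-(t ^ β)))
    with hCdef
  have hCne : C ≠ ⊤ := hC
  set M : ℝ := C.toReal with hM
  have hΓβ : (0:ℝ) < Real.Gamma (β + 1) := Real.Gamma_pos_of_pos (by linarith)
  have hM0 : 0 ≤ M := ENNReal.toReal_nonneg
  have key : ∀ T : ℝ, 0 < T → T ≤ M + T ^ β * M / Real.Gamma (β + 1) := by
    intro T hT
    have hint : IntegrableOn (fun t => mittagLefflerReal β (-(t ^ β))) (Set.Ioc 0 T) volume :=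
      ((ml_contOn hβ0 hT).integrableOn_compact isCompact_Icc).mono_set Set.Ioc_subset_Icc_self
    have hker : IntegrableOn (fun s => (T - s) ^ β * mittagLefflerReal β (-(s ^ β)))
        (Set.Ioc 0 T) volume := by
      refine ((ContinuousOn.mul ?_ (ml_contOn hβ0 hT)).integrableOn_compact
        isCompact_Icc).mono_set Set.Ioc_subset_Icc_self
      exact ((Real.continuous_rpow_const hβ0.le).comp
        (continuous_const.sub continuous_id)).continuousOn
    set hI : ℝ := ∫ t in Set.Ioc (0:ℝ) T, mittagLefflerReal β (-(t ^ β)) with hIdef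
    set K : ℝ := ∫ s in Set.Ioc (0:ℝ) T, (T - s) ^ β * mittagLefflerReal β (-(s ^ β)) with hKdef
    have h1 : hI ≤ M :=
      real_le_of_ofReal_le hCne
        ((ofReal_integral_le hint).trans (lintegral_mono_set Set.Ioc_subset_Ioi_self))
    have h2 : K ≤ T ^ β * M := by
      have s1 : ENNReal.ofReal K ≤ ENNReal.ofReal (T ^ β) * C := by
        refine (ofReal_integral_le hker).trans ?_
        have s2 : (∫⁻ s in Set.Ioc (0:ℝ) T,
              ENNReal.ofReal ((T - s) ^ β * mittagLefflerReal β (-(s ^ β)))) ≤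
            ∫⁻ s in Set.Ioc (0:ℝ) T,
              ENNReal.ofReal (T ^ β) * ENNReal.ofReal (mittagLefflerReal β (-(s ^ β))) := by
          apply lintegral_mono_ae
          rw [ae_restrict_iff' measurableSet_Ioc]
          refine Filter.Eventually.of_forall fun s hs => ?_
          have hTs : (0:ℝ) ≤ T - s := by linarith [hs.2]
          rw [ENNReal.ofReal_mul (Real.rpow_nonneg hTs β)]
          exact mul_le_mul_left
            (ENNReal.ofReal_le_ofReal (Real.rpow_le_rpow hTs (by linarith [hs.1]) hβ0.le)) _
        refine s2.trans ?_
        rw [lintegral_const_mul' _ _ ENNReal.ofReal_ne_top]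
        exact mul_le_mul_right (lintegral_mono_set Set.Ioc_subset_Ioi_self) _
      have h3 := real_le_of_ofReal_le (ENNReal.mul_ne_top ENNReal.ofReal_ne_top hCne) s1
      rwa [ENNReal.toReal_mul, ENNReal.toReal_ofReal (Real.rpow_nonneg hT.le β)] at h3
    have hid : K = Real.Gamma (β + 1) * (T - hI) := by
      set a : ℕ → ℝ := fun n => (-1:ℝ) ^ n * T ^ (β * n + 1) / Real.Gamma (β * n + 2) with ha
      have hsa : Summable a := ml_coeff_summable hβ0 hT
      have e1 : hI = ∑' n, a n := ml_integral_eq hβ0 hT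
      have e2 : K = Real.Gamma (β + 1) * ∑' n : ℕ, -a (n + 1) := by
        rw [hKdef, ml_kernel_integral_eq hβ0 hT, ← tsum_mul_left]
        refine tsum_congr fun n => ?_
        simp only [ha]
        push_cast
        rw [show β * ((n:ℝ) + 1) + 1 = β * n + β + 1 from by ring,
          show β * ((n:ℝ) + 1) + 2 = β * n + β + 2 from by ring, pow_succ]
        ring
      have e3 : ∑' n : ℕ, -a (n + 1) = a 0 - ∑' n, a n := by
        rw [tsum_neg, Summable.tsum_eq_zero_add hsa]; ring
      have e4 : a 0 = T := by
        simp only [ha, Nat.cast_zero, mul_zero, zero_add, pow_zero, one_mul]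
        rw [Real.rpow_one, Real.Gamma_two, div_one]
      rw [e2, e3, e4, e1]
    have hTid : T = hI + K / Real.Gamma (β + 1) := by rw [hid]; field_simp; ring
    have h3 : K / Real.Gamma (β + 1) ≤ T ^ β * M / Real.Gamma (β + 1) :=
      div_le_div_of_nonneg_right h2 hΓβ.le
    linarith [h1, h3]
  set D : ℝ := M / Real.Gamma (β + 1) with hD
  have hD0 : 0 ≤ D := div_nonneg hM0 hΓβ.le
  set T : ℝ := max 1 ((M + D + 1) ^ ((1 - β)⁻¹)) with hTdef
  have hT1 : (1:ℝ) ≤ T := le_max_left _ _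
  have hTpos : 0 < T := lt_of_lt_of_le one_pos hT1
  have h1β : (0:ℝ) < 1 - β := by linarith
  have hMD : (0:ℝ) ≤ M + D + 1 := by linarith
  have hpow : M + D + 1 ≤ T ^ (1 - β) := by
    calc M + D + 1 = ((M + D + 1) ^ ((1 - β)⁻¹)) ^ (1 - β) :=
          (Real.rpow_inv_rpow hMD h1β.ne').symm
      _ ≤ T ^ (1 - β) := Real.rpow_le_rpow (Real.rpow_nonneg hMD _) (le_max_right _ _) h1β.le
  have hTβ : (1:ℝ) ≤ T ^ β := Real.one_le_rpow hT1 hβ0.le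
  have hsplit : T ^ β * T ^ (1 - β) = T := by
    rw [← Real.rpow_add hTpos]; norm_num
  have hk := key T hTpos
  have hbig : T ^ β * (M + D + 1) ≤ T := by
    calc T ^ β * (M + D + 1) ≤ T ^ β * T ^ (1 - β) :=
          mul_le_mul_of_nonneg_left hpow (by positivity)
      _ = T := hsplit
  have hTβM : T ^ β * M / Real.Gamma (β + 1) = T ^ β * D := by rw [hD]; ring
  rw [hTβM] at hk
  nlinarith [mul_nonneg (sub_nonneg.mpr hTβ) hM0]
end

section
/- For every β ∈ (0,1], every t ≥ 0, and every complex number z, the probability generating function of the fractional Poisson probabilities satisfies Σ_{n=0}^∞ z^n · (t^(βn)/n!) E_β^(n)(−t^β) = E_β((z − 1) t^β). In particular, taking z = 1, the fractional Poisson probabilities sum to one: Σ_{n=0}^∞ (t^(βn)/n!) E_β^(n)(−t^β) = 1. -/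
/-- The Mittag-Leffler function of order `β`, defined by the power series
`E_β(z) = ∑ n, z ^ n / Γ(1 + β n)`. -/
noncomputable def mittagLeffler (β : ℝ) (z : ℂ) : ℂ :=
  ∑' n : ℕ, z ^ n / Complex.Gamma (1 + (β : ℂ) * n)

/-- The fractional Poisson probability of order `β`:
`P_n(t) = (t^(βn)/n!) E_β^(n)(−t^β)`, where `E_β^(n)` is the `n`-th derivative of the
Mittag-Leffler function. -/
noncomputable def fracPoissonProb (β : ℝ) (n : ℕ) (t : ℝ) : ℂ :=
  ((t ^ (β * n) / n.factorial : ℝ) : ℂ) * iteratedDeriv n (mittagLeffler β) (-((t ^ β : ℝ) : ℂ))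

open Filter in
/-- Gamma ratio lower bound from log-convexity: `Γ(x+β) ≥ (x-1)^β Γ(x)` for `x > 1`, `0 < β ≤ 1`. -/
lemma gamma_ratio_lb {β x : ℝ} (hβ0 : 0 < β) (hx : 1 < x) :
    (x - 1) ^ β * Real.Gamma x ≤ Real.Gamma (x + β) := by
  have hx1 : (0:ℝ) < x - 1 := by linarith
  have hx0 : (0:ℝ) < x := by linarith
  have hxβ : (0:ℝ) < x + β := by linarith
  have hslope := Real.convexOn_log_Gamma.slope_mono_adjacent (x := x - 1) (y := x) (z := x + β)
    (Set.mem_Ioi.mpr hx1) (Set.mem_Ioi.mpr hxβ) (by linarith) (by linarith)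
  have hG1 : Real.Gamma x = (x - 1) * Real.Gamma (x - 1) := by
    have := Real.Gamma_add_one (s := x - 1) hx1.ne'
    simpa using this
  have hGx : 0 < Real.Gamma x := Real.Gamma_pos_of_pos hx0
  have hGx1 : 0 < Real.Gamma (x - 1) := Real.Gamma_pos_of_pos hx1
  have hGxβ : 0 < Real.Gamma (x + β) := Real.Gamma_pos_of_pos hxβ
  have hL : (Real.log (Real.Gamma x) - Real.log (Real.Gamma (x - 1))) / (x - (x - 1))
      = Real.log (x - 1) := by
    rw [hG1, Real.log_mul hx1.ne' hGx1.ne']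
    field_simp
    ring
  rw [Function.comp_apply, Function.comp_apply, Function.comp_apply] at hslope
  rw [hL] at hslope
  have hβ' : β * Real.log (x - 1) ≤ Real.log (Real.Gamma (x + β)) - Real.log (Real.Gamma x) := by
    have h2 : x + β - x = β := by ring
    rw [h2] at hslope
    have h3 := (le_div_iff₀ hβ0).mp hslope
    nlinarith [h3]
  have key : β * Real.log (x - 1) + Real.log (Real.Gamma x) ≤ Real.log (Real.Gamma (x + β)) := by
    linarith
  calc (x - 1) ^ β * Real.Gamma x
      = Real.exp (β * Real.log (x - 1)) * Real.exp (Real.log (Real.Gamma x)) := by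
        rw [Real.rpow_def_of_pos hx1, Real.exp_log hGx, mul_comm β]
    _ = Real.exp (β * Real.log (x - 1) + Real.log (Real.Gamma x)) := (Real.exp_add _ _).symm
    _ ≤ Real.exp (Real.log (Real.Gamma (x + β))) := Real.exp_le_exp.mpr key
    _ = Real.Gamma (x + β) := Real.exp_log hGxβ

open Filter in
lemma ml_summable_s11 {β : ℝ} (hβ0 : 0 < β) (r : NNReal) :
    Summable fun n : ℕ => ‖(Complex.Gamma (1 + (β : ℂ) * n))⁻¹‖ * (r : ℝ) ^ n := by
  set R : ℝ := max (r : ℝ) 1 with hRdef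
  have hR1 : (1:ℝ) ≤ R := le_max_right _ _
  have hR0 : (0:ℝ) < R := lt_of_lt_of_le one_pos hR1
  have hrR : (r : ℝ) ≤ R := le_max_left _ _
  have hnorm : ∀ n : ℕ, ‖(Complex.Gamma (1 + (β : ℂ) * n))⁻¹‖
      = (Real.Gamma (1 + β * n))⁻¹ := by
    intro n
    have hcast : (1 + (β : ℂ) * n) = ((1 + β * n : ℝ) : ℂ) := by push_cast; ring
    have hpos : 0 < Real.Gamma (1 + β * n) :=
      Real.Gamma_pos_of_pos (by positivity)
    rw [hcast, Complex.Gamma_ofReal, norm_inv, Complex.norm_real,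
      Real.norm_of_nonneg hpos.le]
  have htend : Tendsto (fun n : ℕ => (β * n) ^ β) atTop atTop := by
    apply (tendsto_rpow_atTop hβ0).comp
    exact (tendsto_natCast_atTop_atTop (R := ℝ)).const_mul_atTop hβ0
  apply summable_of_ratio_norm_eventually_le (r := 1/2) (by norm_num)
  filter_upwards [htend.eventually_ge_atTop (2 * R), eventually_ge_atTop 1] with n hn hn1
  have hβn : (0:ℝ) < β * n := by
    have : (1:ℝ) ≤ (n:ℝ) := by exact_mod_cast hn1
    nlinarith
  have hx : (1:ℝ) < 1 + β * n := by linarith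
  have hGx : 0 < Real.Gamma (1 + β * n) := Real.Gamma_pos_of_pos (by linarith)
  have hGX : 0 < Real.Gamma (1 + β * (n + 1)) := Real.Gamma_pos_of_pos (by positivity)
  have hratio : 2 * R * Real.Gamma (1 + β * n) ≤ Real.Gamma (1 + β * (n + 1)) := by
    have h1 : (1 + β * n) + β = 1 + β * (n + 1) := by ring
    have h2 := gamma_ratio_lb hβ0 hx
    rw [h1] at h2
    have h3 : (1 + β * n - 1) = β * n := by ring
    rw [h3] at h2
    have h4 : 2 * R * Real.Gamma (1 + β * n) ≤ (β * n) ^ β * Real.Gamma (1 + β * n) := by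
      apply mul_le_mul_of_nonneg_right hn hGx.le
    linarith
  have hcastn : ((n : ℕ) + 1 : ℕ) = (n + 1 : ℕ) := rfl
  rw [Real.norm_of_nonneg (by positivity), Real.norm_of_nonneg (by positivity),
    hnorm, hnorm]
  have hpush : (((n + 1 : ℕ) : ℝ)) = (n : ℝ) + 1 := by push_cast; ring
  rw [hpush]
  have hgoal : (Real.Gamma (1 + β * ((n:ℝ) + 1)))⁻¹ * (r : ℝ) ^ (n + 1)
      ≤ 1 / 2 * ((Real.Gamma (1 + β * n))⁻¹ * (r : ℝ) ^ n) := by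
    have hinv : (Real.Gamma (1 + β * ((n:ℝ) + 1)))⁻¹ ≤ (2 * R * Real.Gamma (1 + β * n))⁻¹ := by
      apply inv_anti₀ (by positivity) hratio
    calc (Real.Gamma (1 + β * ((n:ℝ) + 1)))⁻¹ * (r : ℝ) ^ (n + 1)
        ≤ (2 * R * Real.Gamma (1 + β * n))⁻¹ * ((r : ℝ) ^ n * R) := by
          apply mul_le_mul hinv _ (by positivity) (by positivity)
          rw [pow_succ]
          exact mul_le_mul_of_nonneg_left hrR (by positivity)
      _ = 1 / 2 * ((Real.Gamma (1 + β * n))⁻¹ * (r : ℝ) ^ n) := by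
          field_simp
  exact hgoal

lemma ml_eq_sum (β : ℝ) :
    mittagLeffler β = (FormalMultilinearSeries.ofScalars ℂ
      (fun n : ℕ => (Complex.Gamma (1 + (β : ℂ) * n))⁻¹)).sum := by
  funext z
  unfold mittagLeffler FormalMultilinearSeries.sum
  refine tsum_congr fun n => ?_
  rw [FormalMultilinearSeries.ofScalars_apply_eq]
  rw [smul_eq_mul, div_eq_mul_inv, mul_comm]

lemma ml_differentiable {β : ℝ} (hβ0 : 0 < β) : Differentiable ℂ (mittagLeffler β) := by
  set p := FormalMultilinearSeries.ofScalars ℂ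
    (fun n : ℕ => (Complex.Gamma (1 + (β : ℂ) * n))⁻¹) with hp
  have hrad : p.radius = ⊤ := by
    apply p.radius_eq_top_of_summable_norm
    intro r
    have := ml_summable_s11 hβ0 r
    apply this.congr
    intro n
    rw [hp, FormalMultilinearSeries.ofScalars_norm]
  have hball : HasFPowerSeriesOnBall p.sum p 0 p.radius :=
    p.hasFPowerSeriesOnBall (by rw [hrad]; exact ENNReal.zero_lt_top)
  rw [ml_eq_sum β, ← hp]
  intro z
  have hz : z ∈ EMetric.ball (0 : ℂ) p.radius := by
    rw [hrad]; exact EMetric.mem_ball.mpr (edist_lt_top _ _)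
  exact (hball.analyticAt_of_mem hz).differentiableAt

/-- For `β ∈ (0,1]`, `t ≥ 0` and `z ∈ ℂ`, the probability generating function of the
fractional Poisson probabilities satisfies
`∑ n, z^n (t^(βn)/n!) E_β^(n)(−t^β) = E_β((z−1) t^β)`; in particular, at `z = 1` the
fractional Poisson probabilities sum to one. -/
theorem fracPoisson_pgf (β : ℝ) (hβ : β ∈ Set.Ioc (0 : ℝ) 1) (t : ℝ) (ht : 0 ≤ t) :
    (∀ z : ℂ, (∑' n : ℕ, z ^ n * fracPoissonProb β n t) =
        mittagLeffler β ((z - 1) * ((t ^ β : ℝ) : ℂ))) ∧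
      (∑' n : ℕ, fracPoissonProb β n t) = 1 := by
  obtain ⟨hβ0, hβ1⟩ := hβ
  have hdiff := ml_differentiable hβ0
  have key : ∀ z : ℂ, (∑' n : ℕ, z ^ n * fracPoissonProb β n t) =
      mittagLeffler β ((z - 1) * ((t ^ β : ℝ) : ℂ)) := by
    intro z
    rw [← (Complex.hasSum_taylorSeries_of_entire hdiff (-((t ^ β : ℝ) : ℂ))
      ((z - 1) * ((t ^ β : ℝ) : ℂ))).tsum_eq]
    refine tsum_congr fun n => ?_
    have h1 : ((z - 1) * ((t ^ β : ℝ) : ℂ) - -((t ^ β : ℝ) : ℂ)) = z * ((t ^ β : ℝ) : ℂ) := by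
      ring
    rw [h1]
    unfold fracPoissonProb
    have h2 : (t ^ (β * n) : ℝ) = (t ^ β) ^ n := by
      rw [Real.rpow_mul ht, Real.rpow_natCast]
    rw [h2]
    simp only [smul_eq_mul]
    push_cast
    rw [mul_pow]
    ring
  refine ⟨key, ?_⟩
  have h1 := key 1
  simp only [one_pow, one_mul, sub_self, zero_mul] at h1
  rw [h1]
  unfold mittagLeffler
  rw [tsum_eq_single 0]
  · simp [Complex.Gamma_one]
  · intro n hn
    simp [zero_pow hn]
end

section
/- Let M ≥ 1 be an integer, β ∈ (0,1), and let Q = (q_{k,j}) be the transition matrix of the undelayed (α = 0) Ehrenfest chain on {0, 1, …, M}. For i, j ∈ {0, …, M} and s > 0 define the Laplace-domain solution p̃_{i,j}(s) = Σ_{n=0}^∞ (Q^n)_{i,j} · s^(β−1)/(1 + s^β)^(n+1), and adopt the convention p̃_{i,−1} ≡ 0 and p̃_{i,M+1} ≡ 0. Then for every i, every 1 ≤ j ≤ M−1, and every s > 0: (1 + s^β) p̃_{i,j}(s) = s^(β−1) δ_{ij} + q_{j−1,j} p̃_{i,j−1}(s) + q_{j+1,j} p̃_{i,j+1}(s). 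-/
/-- Transition matrix of the undelayed (`α = 0`) Ehrenfest chain on `{0, 1, …, M}`:
`q (k, k−1) = k/M`, `q (k, k+1) = (M−k)/M`, and `0` otherwise. -/
noncomputable def ehrenfestQ0 (M : ℕ) : Matrix (Fin (M + 1)) (Fin (M + 1)) ℝ :=
  fun k j =>
    if (j : ℕ) + 1 = (k : ℕ) then (k : ℕ) / M
    else if (j : ℕ) = (k : ℕ) + 1 then ((M : ℝ) - (k : ℕ)) / M
    else 0

/-- The Laplace-domain solution `p̃_{i,j}(s) = ∑_n (Q^n)_{i,j} s^(β−1)/(1+s^β)^(n+1)`. -/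
noncomputable def rladLaplaceSol (M : ℕ) (β : ℝ) (i j : Fin (M + 1)) (s : ℝ) : ℝ :=
  ∑' n : ℕ, (ehrenfestQ0 M ^ n) i j * (s ^ (β - 1) / (1 + s ^ β) ^ (n + 1))

lemma ehrenfestQ0_nonneg (M : ℕ) (k j : Fin (M + 1)) : 0 ≤ ehrenfestQ0 M k j := by
  unfold ehrenfestQ0
  have hk : ((k : ℕ) : ℝ) ≤ (M : ℝ) := by
    exact_mod_cast Nat.lt_succ_iff.mp k.isLt
  split_ifs with h1 h2
  · positivity
  · apply div_nonneg (by linarith) (Nat.cast_nonneg M)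
  · exact le_rfl

lemma ehrenfestQ0_rowsum (M : ℕ) (hM : 1 ≤ M) (k : Fin (M + 1)) :
    ∑ j, ehrenfestQ0 M k j = 1 := by
  have hMR : (0 : ℝ) < (M : ℝ) := by exact_mod_cast hM
  have hsplit : ∀ j : Fin (M + 1), ehrenfestQ0 M k j =
      (if (j : ℕ) + 1 = (k : ℕ) then ((k : ℕ) : ℝ) / M else 0) +
      (if (j : ℕ) = (k : ℕ) + 1 then ((M : ℝ) - (k : ℕ)) / M else 0) := by
    intro j
    unfold ehrenfestQ0
    split_ifs with h1 h2 <;> first | omega | ring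
  rw [Finset.sum_congr rfl (fun j _ => hsplit j), Finset.sum_add_distrib]
  have h1 : ∑ j : Fin (M + 1), (if (j : ℕ) + 1 = (k : ℕ) then ((k : ℕ) : ℝ) / M else 0) =
      ((k : ℕ) : ℝ) / M := by
    rcases Nat.eq_zero_or_pos (k : ℕ) with hk0 | hk0
    · rw [Finset.sum_eq_zero, hk0]
      · simp
      · intro j _; rw [if_neg (by omega)]
    · rw [Finset.sum_eq_single (⟨(k : ℕ) - 1, by omega⟩ : Fin (M + 1))]
      · rw [if_pos (by simp; omega)]
      · intro b _ hb
        rw [if_neg]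
        intro h
        exact hb (Fin.ext (by simp at h ⊢; omega))
      · intro h; exact absurd (Finset.mem_univ _) h
  have h2 : ∑ j : Fin (M + 1), (if (j : ℕ) = (k : ℕ) + 1 then ((M : ℝ) - (k : ℕ)) / M else 0) =
      ((M : ℝ) - (k : ℕ)) / M := by
    rcases Nat.lt_or_ge (k : ℕ) M with hkM | hkM
    · rw [Finset.sum_eq_single (⟨(k : ℕ) + 1, by omega⟩ : Fin (M + 1))]
      · rw [if_pos (by simp)]
      · intro b _ hb
        rw [if_neg]
        intro h
        exact hb (Fin.ext (by simp at h ⊢; omega))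
      · intro h; exact absurd (Finset.mem_univ _) h
    · have hkM' : (k : ℕ) = M := by omega
      rw [Finset.sum_eq_zero, hkM']
      · simp
      · intro j _
        rw [if_neg]
        have := j.isLt
        omega
  rw [h1, h2]
  field_simp
  ring

lemma ehrenfestQ0_pow_nonneg (M : ℕ) (n : ℕ) (i j : Fin (M + 1)) :
    0 ≤ (ehrenfestQ0 M ^ n) i j := by
  induction n generalizing j with
  | zero => rw [pow_zero, Matrix.one_apply]; positivity
  | succ n ih =>
    rw [pow_succ, Matrix.mul_apply]
    exact Finset.sum_nonneg fun k _ => mul_nonneg (ih k) (ehrenfestQ0_nonneg M k j)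

lemma ehrenfestQ0_pow_rowsum (M : ℕ) (hM : 1 ≤ M) (n : ℕ) (i : Fin (M + 1)) :
    ∑ j, (ehrenfestQ0 M ^ n) i j = 1 := by
  induction n with
  | zero => simp [Matrix.one_apply]
  | succ n ih =>
    simp only [pow_succ, Matrix.mul_apply]
    rw [Finset.sum_comm]
    calc ∑ k, ∑ j, (ehrenfestQ0 M ^ n) i k * ehrenfestQ0 M k j
        = ∑ k, (ehrenfestQ0 M ^ n) i k * ∑ j, ehrenfestQ0 M k j := by
          simp [Finset.mul_sum]
      _ = 1 := by
          simp only [ehrenfestQ0_rowsum M hM, mul_one]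
          exact ih

lemma ehrenfestQ0_pow_le_one (M : ℕ) (hM : 1 ≤ M) (n : ℕ) (i j : Fin (M + 1)) :
    (ehrenfestQ0 M ^ n) i j ≤ 1 := by
  calc (ehrenfestQ0 M ^ n) i j ≤ ∑ k, (ehrenfestQ0 M ^ n) i k :=
        Finset.single_le_sum (fun k _ => ehrenfestQ0_pow_nonneg M n i k) (Finset.mem_univ j)
    _ = 1 := ehrenfestQ0_pow_rowsum M hM n i

lemma rlad_summable (M : ℕ) (hM : 1 ≤ M) (β : ℝ) (i j : Fin (M + 1)) (s : ℝ) (hs : 0 < s) :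
    Summable fun n : ℕ => (ehrenfestQ0 M ^ n) i j * (s ^ (β - 1) / (1 + s ^ β) ^ (n + 1)) := by
  have hsb : 0 < s ^ β := Real.rpow_pos_of_pos hs β
  have hu : (1 : ℝ) < 1 + s ^ β := by linarith
  have hc : 0 ≤ s ^ (β - 1) := (Real.rpow_pos_of_pos hs _).le
  set u : ℝ := 1 + s ^ β
  have hu0 : (0 : ℝ) < u := by linarith
  have hr0 : (0 : ℝ) ≤ u⁻¹ := by positivity
  have hr1 : u⁻¹ < 1 := by
    rw [inv_lt_one_iff₀]; right; exact hu
  refine Summable.of_nonneg_of_le ?_ ?_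
    (((summable_geometric_of_lt_one hr0 hr1).mul_left (s ^ (β - 1) * u⁻¹)))
  · intro n
    exact mul_nonneg (ehrenfestQ0_pow_nonneg M n i j) (by positivity)
  · intro n
    have h1 : (ehrenfestQ0 M ^ n) i j * (s ^ (β - 1) / u ^ (n + 1)) ≤
        1 * (s ^ (β - 1) / u ^ (n + 1)) := by
      apply mul_le_mul_of_nonneg_right (ehrenfestQ0_pow_le_one M hM n i j)
      positivity
    calc (ehrenfestQ0 M ^ n) i j * (s ^ (β - 1) / u ^ (n + 1))
        ≤ 1 * (s ^ (β - 1) / u ^ (n + 1)) := h1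
      _ = (s ^ (β - 1) * u⁻¹) * u⁻¹ ^ n := by
          rw [one_mul, div_eq_mul_inv, ← inv_pow, pow_succ]
          ring

/-- For `1 ≤ j ≤ M−1` and `s > 0`, the Laplace-domain solution satisfies
`(1 + s^β) p̃_{i,j}(s) = s^(β−1) δ_{ij} + q_{j−1,j} p̃_{i,j−1}(s) + q_{j+1,j} p̃_{i,j+1}(s)`. -/
theorem rladLaplaceSol_equation (M : ℕ) (hM : 1 ≤ M) (β : ℝ) (hβ : β ∈ Set.Ioo (0 : ℝ) 1)
    (i j : Fin (M + 1)) (hj1 : 1 ≤ (j : ℕ)) (hj2 : (j : ℕ) ≤ M - 1) (s : ℝ) (hs : 0 < s) :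
    (1 + s ^ β) * rladLaplaceSol M β i j s =
      s ^ (β - 1) * (if i = j then 1 else 0) +
        ehrenfestQ0 M ⟨(j : ℕ) - 1, by omega⟩ j *
          rladLaplaceSol M β i ⟨(j : ℕ) - 1, by omega⟩ s +
        ehrenfestQ0 M ⟨(j : ℕ) + 1, by omega⟩ j *
          rladLaplaceSol M β i ⟨(j : ℕ) + 1, by omega⟩ s := by
  have hsb : 0 < s ^ β := Real.rpow_pos_of_pos hs β
  set c : ℝ := s ^ (β - 1) with hcdef
  set u : ℝ := 1 + s ^ β with hudef
  have hu0 : (0 : ℝ) < u := by simp only [hudef]; linarith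
  have hune : u ≠ 0 := ne_of_gt hu0
  set jm : Fin (M + 1) := ⟨(j : ℕ) - 1, by omega⟩ with hjm
  set jp : Fin (M + 1) := ⟨(j : ℕ) + 1, by omega⟩ with hjp
  set Q := ehrenfestQ0 M with hQ
  have hsum : ∀ l : Fin (M + 1),
      Summable fun n : ℕ => (Q ^ n) i l * (c / u ^ (n + 1)) :=
    fun l => rlad_summable M hM β i l s hs
  -- step recurrence for matrix powers
  have hstep : ∀ n : ℕ, (Q ^ (n + 1)) i j = (Q ^ n) i jm * Q jm j + (Q ^ n) i jp * Q jp j := by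
    intro n
    rw [pow_succ, Matrix.mul_apply]
    have hzero : ∀ k : Fin (M + 1), k ≠ jm → k ≠ jp → Q k j = 0 := by
      intro k hk1 hk2
      have h1 : (k : ℕ) ≠ (j : ℕ) - 1 := fun h => hk1 (Fin.ext (by simp [hjm, h]))
      have h2 : (k : ℕ) ≠ (j : ℕ) + 1 := fun h => hk2 (Fin.ext (by simp [hjp, h]))
      simp only [hQ, ehrenfestQ0]
      rw [if_neg (by omega), if_neg (by omega)]
    have hne : jm ≠ jp := by
      simp only [hjm, hjp, ne_eq, Fin.mk.injEq]
      omega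
    have hterm : ∀ k : Fin (M + 1), (Q ^ n) i k * Q k j =
        (if k = jm then (Q ^ n) i jm * Q jm j else 0) +
        (if k = jp then (Q ^ n) i jp * Q jp j else 0) := by
      intro k
      by_cases h1 : k = jm
      · subst h1; rw [if_pos rfl, if_neg hne]; ring
      · by_cases h2 : k = jp
        · subst h2; rw [if_neg h1, if_pos rfl]; ring
        · rw [if_neg h1, if_neg h2, hzero k h1 h2]; ring
    rw [Finset.sum_congr rfl (fun k _ => hterm k), Finset.sum_add_distrib,
      Finset.sum_ite_eq' Finset.univ jm, Finset.sum_ite_eq' Finset.univ jp]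
    simp
  -- main computation
  have key : u * rladLaplaceSol M β i j s =
      ∑' n : ℕ, u * ((Q ^ n) i j * (c / u ^ (n + 1))) := by
    rw [rladLaplaceSol, ← tsum_mul_left]
  rw [key, Summable.tsum_eq_zero_add ((hsum j).mul_left u)]
  have h0 : u * ((Q ^ 0) i j * (c / u ^ (0 + 1))) = c * (if i = j then 1 else 0) := by
    rw [pow_zero, Matrix.one_apply]
    split_ifs
    · field_simp
      ring
    · ring
  have htail : ∀ n : ℕ, u * ((Q ^ (n + 1)) i j * (c / u ^ (n + 1 + 1))) =
      Q jm j * ((Q ^ n) i jm * (c / u ^ (n + 1))) +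
      Q jp j * ((Q ^ n) i jp * (c / u ^ (n + 1))) := by
    intro n
    rw [hstep n]
    have hpow : u ^ (n + 1 + 1) = u ^ (n + 1) * u := pow_succ u (n + 1)
    field_simp [hpow]
    ring
  rw [tsum_congr htail, Summable.tsum_add ((hsum jm).mul_left _) ((hsum jp).mul_left _),
    tsum_mul_left, tsum_mul_left, h0]
  rw [rladLaplaceSol, rladLaplaceSol]
  ring
end
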